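/- Let R = (G,Φ,Φ⁺) be a finite, faithful, complete signed groupoid set. Then the generalized Brink–Howlett signed groupoid set R^□ = (G^□, Ψ, Ψ⁺) is finite and complete; moreover for each object (a,X), the natural inclusion of the weak order on morphisms of G^□ with codomain (a,X) into the weak order on ₐG preserves all joins. -/
import Mathlib


open CategoryTheory

universe u v

/-- A signed groupoid set: a groupoid `G` acting on a family of definitely involuted
sets `R a` (`a ∈ Ob G`), with involution `neg`, positive parts `pos a`, and the action
commuting with the involution. -/
structure SGS (G : Type u) [Groupoid G] (R : G → Type v) where
  neg : ∀ {a : G}, R a → R a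
  pos : ∀ a : G, Set (R a)
  act : ∀ {a b : G}, (b ⟶ a) → R b → R a
  neg_neg : ∀ {a : G} (x : R a), neg (neg x) = x
  pos_iff : ∀ {a : G} (x : R a), x ∈ pos a ↔ neg x ∉ pos a
  act_id : ∀ {a : G} (x : R a), act (𝟙 a) x = x
  act_comp : ∀ {a b c : G} (g : c ⟶ b) (f : b ⟶ a) (x : R c),
      act f (act g x) = act (g ≫ f) x
  act_neg : ∀ {a b : G} (f : b ⟶ a) (x : R b), act f (neg x) = neg (act f x)

/-- The morphisms of `G` with codomain `a`. -/
abbrev SHoms (G : Type u) [Groupoid G] (a : G) : Type _ := Σ b : G, (b ⟶ a)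

namespace SGS

variable {G : Type u} [Groupoid G] {R : G → Type v} (S : SGS G R)

/-- The inversion set of a morphism `f : b ⟶ a`: positive roots at `a` sent to
negative roots at `b` by `f⁻¹`. -/
def Phi {a b : G} (f : b ⟶ a) : Set (R a) :=
  {α | α ∈ S.pos a ∧ S.act (Groupoid.inv f) α ∉ S.pos b}

/-- The inversion set of an element of `SHoms G a`. -/
def PhiS {a : G} (g : SHoms G a) : Set (R a) := S.Phi g.2

/-- `S` is faithful if only identity morphisms have empty inversion set. -/
def Faithful : Prop :=
  ∀ ⦃a b : G⦄ (f : b ⟶ a), S.Phi f = ∅ → ∃ h : b = a, f = eqToHom h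

/-- `j` is an upper bound of `F` in the weak order at `a`. -/
def IsUB {a : G} (F : Set (SHoms G a)) (j : SHoms G a) : Prop :=
  ∀ g ∈ F, S.PhiS g ⊆ S.PhiS j

/-- `j` is a least upper bound of `F` in the weak order at `a`. -/
def IsLUBw {a : G} (F : Set (SHoms G a)) (j : SHoms G a) : Prop :=
  S.IsUB F j ∧ ∀ k : SHoms G a, S.IsUB F k → S.PhiS j ⊆ S.PhiS k

/-- `S` is complete: the weak order at every object is a complete lattice
(equivalently, every family of morphisms with a common codomain has a join). -/
def Complete : Prop := ∀ (a : G) (F : Set (SHoms G a)), ∃ j : SHoms G a, S.IsLUBw F j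

/-- `S` is finite: finitely many objects, morphisms and roots. -/
def FiniteSGS (_S : SGS G R) : Prop :=
  Finite G ∧ (∀ a b : G, Finite (a ⟶ b)) ∧ ∀ a : G, Finite (R a)

/-- A square `(x, w, y, z)`: a commuting square `xw = yz` with `x(Φ_w) = Φ_y`. -/
def Square {a b c d : G} (x : b ⟶ d) (w : a ⟶ b) (y : c ⟶ d) (z : a ⟶ c) : Prop :=
  w ≫ x = z ≫ y ∧ S.act x '' S.Phi w = S.Phi y

/-- The positive real roots at `a`: the union of all inversion sets at `a`. -/
def posRe (a : G) : Set (R a) := ⋃ g : SHoms G a, S.PhiS g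

/-- An atomic morphism: an atom of the weak order at its codomain. -/
def Atomic {a : G} (g : SHoms G a) : Prop :=
  S.PhiS g ≠ ∅ ∧ ∀ h : SHoms G a, S.PhiS h ⊆ S.PhiS g →
    S.PhiS h = ∅ ∨ S.PhiS h = S.PhiS g

/-- A simple morphism: one whose inversion set is a singleton. -/
def Simple {a b : G} (f : b ⟶ a) : Prop := ∃ α : R a, S.Phi f = {α}

/-- Interval finiteness: every interval `[1ₐ, g]` of a weak order is finite. -/
def IntervalFinite : Prop :=
  ∀ (a : G) (g : SHoms G a), {h : SHoms G a | S.PhiS h ⊆ S.PhiS g}.Finite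

/-- Preprincipal: interval finite, and the inversion set of an atomic morphism is
contained in, or disjoint from, any other inversion set at the same object. -/
def Preprincipal : Prop :=
  S.IntervalFinite ∧ ∀ (a : G) (s g : SHoms G a), S.Atomic s →
    S.PhiS s ⊆ S.PhiS g ∨ S.PhiS s ∩ S.PhiS g = ∅

/-- Antipodal: the weak order at each object has a maximum element. -/
def Antipodal : Prop :=
  ∀ a : G, ∃ ω : SHoms G a, ∀ g : SHoms G a, S.PhiS g ⊆ S.PhiS ω

end SGS

namespace SGS

variable {G : Type u} [Groupoid G] {R : G → Type v} (S : SGS G R)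

/-- `f : a ⟶ b` underlies a morphism `(a, X) ⟶ (b, Y)` of `G^□` iff there is a
bijection `σ : X → Y` with `f(Φ_g) = Φ_{σ g}` for all `g ∈ X`. -/
def IsBHHom {a b : G} (X : Set (SHoms G a)) (Y : Set (SHoms G b)) (f : a ⟶ b) :
    Prop :=
  ∃ σ : X → Y, Function.Bijective σ ∧
    ∀ g : X, S.act f '' S.PhiS g.1 = S.PhiS (σ g).1

/-- The morphisms of `G^□` with codomain `(a, X)`. -/
def BHInto (a : G) (X : Set (SHoms G a)) : Type _ :=
  Σ (b : G) (Y : Set (SHoms G b)), {f : b ⟶ a // S.IsBHHom Y X f}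

/-- The underlying morphism of `G` with codomain `a` of a morphism of `G^□` with
codomain `(a, X)`. -/
def BHunder {a : G} {X : Set (SHoms G a)} (m : S.BHInto a X) : SHoms G a :=
  ⟨m.1, m.2.2.1⟩

end SGS

namespace SGS

variable {G : Type u} [Groupoid G] {R : G → Type v} (S : SGS G R)

lemma ginv_ginv {a b : G} (x : b ⟶ a) : Groupoid.inv (Groupoid.inv x) = x := by
  simp [Groupoid.inv_eq_inv]

lemma ginv_comp {c b a : G} (q : c ⟶ b) (x : b ⟶ a) :
    Groupoid.inv (q ≫ x) = Groupoid.inv x ≫ Groupoid.inv q := by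
  simp [Groupoid.inv_eq_inv]

lemma act_act_inv {a b : G} (f : b ⟶ a) (α : R a) :
    S.act f (S.act (Groupoid.inv f) α) = α := by
  rw [S.act_comp, Groupoid.inv_comp, S.act_id]

lemma act_inv_act {a b : G} (f : b ⟶ a) (β : R b) :
    S.act (Groupoid.inv f) (S.act f β) = β := by
  rw [S.act_comp, Groupoid.comp_inv, S.act_id]

lemma neg_pos_iff {a : G} (α : R a) : S.neg α ∈ S.pos a ↔ α ∉ S.pos a :=
  (S.pos_iff _).trans (by rw [S.neg_neg])

lemma mem_phi {a b : G} (f : b ⟶ a) (α : R a) :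
    α ∈ S.Phi f ↔ α ∈ S.pos a ∧ S.act (Groupoid.inv f) α ∉ S.pos b := Iff.rfl

lemma phi_pos {a b : G} {f : b ⟶ a} {α : R a} (h : α ∈ S.Phi f) : α ∈ S.pos a :=
  ((S.mem_phi f α).mp h).1

lemma phi_act {a b : G} {f : b ⟶ a} {α : R a} (h : α ∈ S.Phi f) :
    S.act (Groupoid.inv f) α ∉ S.pos b :=
  ((S.mem_phi f α).mp h).2

lemma mem_phi_ginv {a b : G} (x : b ⟶ a) (β : R b) :
    β ∈ S.Phi (Groupoid.inv x) ↔ β ∈ S.pos b ∧ S.act x β ∉ S.pos a := by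
  rw [S.mem_phi, ginv_ginv]

/-- The master computation: membership in the inversion set of a composite. -/
lemma mem_phi_comp {c b a : G} (q : c ⟶ b) (x : b ⟶ a) (α : R a) :
    α ∈ S.Phi (q ≫ x) ↔ α ∈ S.pos a ∧
      (S.act (Groupoid.inv x) α ∈ S.Phi q ∨
        (α ∈ S.Phi x ∧ S.neg (S.act (Groupoid.inv x) α) ∉ S.Phi q)) := by
  have h1 : S.act (Groupoid.inv (q ≫ x)) α
      = S.act (Groupoid.inv q) (S.act (Groupoid.inv x) α) := by
    rw [ginv_comp, ← S.act_comp]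
  rw [S.mem_phi, h1]
  constructor
  · rintro ⟨hA, hC⟩
    refine ⟨hA, ?_⟩
    by_cases hB : S.act (Groupoid.inv x) α ∈ S.pos b
    · exact Or.inl ((S.mem_phi q _).mpr ⟨hB, hC⟩)
    · refine Or.inr ⟨(S.mem_phi x α).mpr ⟨hA, hB⟩, fun hn => ?_⟩
      have h2 := (S.mem_phi q _).mp hn
      have h3 := h2.2
      rw [S.act_neg] at h3
      exact hC ((S.pos_iff _).mpr h3)
  · rintro ⟨hA, hα | ⟨hx, hn⟩⟩
    · exact ⟨hA, (S.phi_act hα)⟩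
    · refine ⟨hA, fun hC => ?_⟩
      apply hn
      refine (S.mem_phi q _).mpr ⟨(S.neg_pos_iff _).mpr ((S.mem_phi x α).mp hx).2, ?_⟩
      rw [S.act_neg]
      exact (S.pos_iff _).mp hC

/-- Lemma A: if `Φx ⊆ Φp` then `Φ(p ∘ x⁻¹)` is the transport of the difference. -/
lemma phi_comp_ginv_of_le {c b a : G} (p : c ⟶ a) (x : b ⟶ a) (h : S.Phi x ⊆ S.Phi p) :
    S.Phi (p ≫ Groupoid.inv x) = S.act (Groupoid.inv x) '' (S.Phi p \ S.Phi x) := by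
  ext β
  rw [S.mem_phi_comp p (Groupoid.inv x) β, ginv_ginv]
  constructor
  · rintro ⟨hB, hα | ⟨hE, hnp⟩⟩
    · refine ⟨S.act x β, ⟨hα, fun hx' => ?_⟩, S.act_inv_act x β⟩
      have := S.phi_act hx'
      rw [S.act_inv_act] at this
      exact this hB
    · exfalso
      apply hnp
      apply h
      have hE' := (S.mem_phi_ginv x β).mp hE
      refine (S.mem_phi x _).mpr ⟨(S.neg_pos_iff _).mpr hE'.2, ?_⟩
      rw [S.act_neg, S.act_inv_act]
      exact (S.pos_iff _).mp hE'.1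
  · rintro ⟨α, ⟨hαp, hαx⟩, rfl⟩
    have hB : S.act (Groupoid.inv x) α ∈ S.pos b := by
      by_contra hB
      exact hαx ((S.mem_phi x α).mpr ⟨S.phi_pos hαp, hB⟩)
    refine ⟨hB, Or.inl ?_⟩
    rw [S.act_act_inv]
    exact hαp

lemma act_phi_comp_ginv {c b a : G} (p : c ⟶ a) (x : b ⟶ a) (h : S.Phi x ⊆ S.Phi p) :
    S.act x '' S.Phi (p ≫ Groupoid.inv x) = S.Phi p \ S.Phi x := by
  rw [S.phi_comp_ginv_of_le p x h, Set.image_image]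
  exact (Set.image_congr fun α _ => S.act_act_inv x α).trans (Set.image_id _)

/-- Lemma B (disjoint case): `Φ(p ∘ x⁻¹) = x⁻¹(Φp) ⊔ Φ(x⁻¹)` when `Φp ∩ Φx = ∅`. -/
lemma phi_comp_ginv_of_disj {c b a : G} (p : c ⟶ a) (x : b ⟶ a)
    (h : ∀ α ∈ S.Phi p, α ∉ S.Phi x) :
    S.Phi (p ≫ Groupoid.inv x)
      = S.act (Groupoid.inv x) '' S.Phi p ∪ S.Phi (Groupoid.inv x) := by
  ext β
  rw [S.mem_phi_comp p (Groupoid.inv x) β, ginv_ginv]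
  constructor
  · rintro ⟨hB, hα | ⟨hE, -⟩⟩
    · exact Or.inl ⟨S.act x β, hα, S.act_inv_act x β⟩
    · exact Or.inr hE
  · rintro (⟨α, hα, rfl⟩ | hE)
    · have hB : S.act (Groupoid.inv x) α ∈ S.pos b := by
        by_contra hB
        exact h α hα ((S.mem_phi x α).mpr ⟨S.phi_pos hα, hB⟩)
      refine ⟨hB, Or.inl ?_⟩
      rw [S.act_act_inv]
      exact hα
    · have hE' := (S.mem_phi_ginv x β).mp hE
      refine ⟨hE'.1, Or.inr ⟨hE, fun hn => ?_⟩⟩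
      refine h _ hn ?_
      refine (S.mem_phi x _).mpr ⟨(S.neg_pos_iff _).mpr hE'.2, ?_⟩
      rw [S.act_neg, S.act_inv_act]
      exact (S.pos_iff _).mp hE'.1

/-- Squares from positivity: `Φ(w ∘ f)` decomposes when `f(Φw)` is positive. -/
lemma phi_comp_of_pos {c b a : G} (w : c ⟶ b) (f : b ⟶ a)
    (h : ∀ β ∈ S.Phi w, S.act f β ∈ S.pos a) :
    S.Phi (w ≫ f) = S.Phi f ∪ S.act f '' S.Phi w ∧
      ∀ α ∈ S.act f '' S.Phi w, α ∉ S.Phi f := by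
  constructor
  · ext α
    rw [S.mem_phi_comp]
    constructor
    · rintro ⟨hA, hα | ⟨hx, -⟩⟩
      · exact Or.inr ⟨_, hα, S.act_act_inv f α⟩
      · exact Or.inl hx
    · rintro (hα | ⟨β, hβ, rfl⟩)
      · refine ⟨S.phi_pos hα, Or.inr ⟨hα, fun hn => ?_⟩⟩
        have h2 := h _ hn
        rw [S.act_neg, S.act_act_inv] at h2
        exact (S.neg_pos_iff α).mp h2 (S.phi_pos hα)
      · refine ⟨h β hβ, Or.inl ?_⟩
        rw [S.act_inv_act]
        exact hβ
  · rintro α ⟨β, hβ, rfl⟩ hαf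
    have h2 := S.phi_act hαf
    rw [S.act_inv_act] at h2
    exact h2 (S.phi_pos hβ)

/-- Faithfulness makes `PhiS` injective. -/
lemma phiS_inj (hfa : S.Faithful) {a : G} {g g' : SHoms G a} (h : S.PhiS g = S.PhiS g') :
    g = g' := by
  obtain ⟨c, f⟩ := g
  obtain ⟨c', f'⟩ := g'
  have hff' : S.Phi f = S.Phi f' := h
  have hw : S.Phi (f' ≫ Groupoid.inv f) = ∅ := by
    ext β
    simp only [Set.mem_empty_iff_false, iff_false]
    intro hβ
    rw [S.mem_phi_comp, ginv_ginv] at hβ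
    obtain ⟨hB, hrest⟩ := hβ
    rcases hrest with hα | ⟨hE, hn⟩
    · rw [← hff'] at hα
      have h2 := S.phi_act hα
      rw [S.act_inv_act] at h2
      exact h2 hB
    · apply hn
      rw [← hff']
      have hE' := (S.mem_phi_ginv f β).mp hE
      refine (S.mem_phi f _).mpr ⟨(S.neg_pos_iff _).mpr hE'.2, ?_⟩
      rw [S.act_neg, S.act_inv_act]
      exact (S.pos_iff _).mp hE'.1
  obtain ⟨heq, hfe⟩ := hfa _ hw
  subst heq
  rw [eqToHom_refl] at hfe
  have : f' = f := by
    calc f' = (f' ≫ Groupoid.inv f) ≫ f := by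
          rw [Category.assoc, Groupoid.inv_comp, Category.comp_id]
    _ = f := by rw [hfe, Category.id_comp]
  rw [this]

/-- The set of morphisms disjoint from a fixed inversion set is closed under joins. -/
lemma join_disj (hcomp : S.Complete) {a b : G} (x : b ⟶ a) (F : Set (SHoms G a))
    {j : SHoms G a} (hj : S.IsLUBw F j)
    (hd : ∀ p ∈ F, ∀ α ∈ S.PhiS p, α ∉ S.Phi x) :
    ∀ α ∈ S.PhiS j, α ∉ S.Phi x := by
  classical
  obtain ⟨V, hV⟩ := hcomp b
    (insert ⟨a, Groupoid.inv x⟩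
      ((fun p : SHoms G a => (⟨p.1, p.2 ≫ Groupoid.inv x⟩ : SHoms G b)) '' F))
  have hEV : S.Phi (Groupoid.inv x) ⊆ S.PhiS V := hV.1 _ (Set.mem_insert _ _)
  have hκUB : S.IsUB F ⟨V.1, V.2 ≫ x⟩ := by
    intro p hp α hα
    have hβ : S.act (Groupoid.inv x) α ∈ S.PhiS V := by
      apply hV.1 _ (Set.mem_insert_of_mem _ (Set.mem_image_of_mem _ hp))
      show S.act (Groupoid.inv x) α ∈ S.Phi (p.2 ≫ Groupoid.inv x)
      rw [S.phi_comp_ginv_of_disj p.2 x (hd p hp)]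
      exact Or.inl ⟨α, hα, rfl⟩
    show α ∈ S.Phi (V.2 ≫ x)
    rw [S.mem_phi_comp]
    exact ⟨S.phi_pos hα, Or.inl hβ⟩
  have hjκ := hj.2 _ hκUB
  intro α hαj hαx
  have hκ : α ∈ S.Phi (V.2 ≫ x) := hjκ hαj
  rw [S.mem_phi_comp] at hκ
  rcases hκ.2 with hβ | ⟨-, hnβ⟩
  · exact ((S.mem_phi x α).mp hαx).2 (S.phi_pos hβ)
  · apply hnβ
    apply hEV
    rw [S.mem_phi_ginv]
    refine ⟨(S.neg_pos_iff _).mpr ((S.mem_phi x α).mp hαx).2, ?_⟩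
    rw [S.act_neg, S.act_act_inv]
    exact (S.pos_iff _).mp ((S.mem_phi x α).mp hαx).1

/-- Square–join: the join of morphisms forming squares with `x` forms a square with `x`. -/
lemma join_sq (hcomp : S.Complete) {a b : G} (x : b ⟶ a) (F : Set (SHoms G a))
    {j M : SHoms G a} (hj : S.IsLUBw F j) (hM : S.IsLUBw (insert ⟨b, x⟩ F) M)
    (hsq : ∀ p ∈ F, (∀ α ∈ S.PhiS p, α ∉ S.Phi x) ∧
      ∃ m : SHoms G a, S.PhiS m = S.Phi x ∪ S.PhiS p) :
    S.PhiS M = S.Phi x ∪ S.PhiS j ∧ ∀ α ∈ S.PhiS j, α ∉ S.Phi x := by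
  classical
  have hdisj := S.join_disj hcomp x F hj (fun p hp => (hsq p hp).1)
  set Fq : Set (SHoms G b) :=
    {q | ∃ p ∈ F, S.PhiS q = S.act (Groupoid.inv x) '' S.PhiS p} with hFqdef
  obtain ⟨Q, hQ⟩ := hcomp b Fq
  have hFqmem : ∀ p ∈ F, ∃ q ∈ Fq, S.PhiS q = S.act (Groupoid.inv x) '' S.PhiS p := by
    intro p hp
    obtain ⟨hd', m, hm⟩ := hsq p hp
    have hxm : S.Phi x ⊆ S.PhiS m := by rw [hm]; exact Set.subset_union_left
    have hset : S.PhiS m \ S.Phi x = S.PhiS p := by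
      rw [hm]
      ext α
      constructor
      · rintro ⟨hα | hα, hn⟩
        · exact absurd hα hn
        · exact hα
      · intro hα
        exact ⟨Or.inr hα, fun hx' => hd' α hα hx'⟩
    have hq : S.PhiS (⟨m.1, m.2 ≫ Groupoid.inv x⟩ : SHoms G b)
        = S.act (Groupoid.inv x) '' S.PhiS p := by
      show S.Phi (m.2 ≫ Groupoid.inv x) = _
      rw [S.phi_comp_ginv_of_le m.2 x hxm]
      exact congrArg _ hset
    exact ⟨_, ⟨p, hp, hq⟩, hq⟩
  have hQdisj : ∀ β ∈ S.PhiS Q, β ∉ S.Phi (Groupoid.inv x) := by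
    apply S.join_disj hcomp (Groupoid.inv x) Fq hQ
    rintro q ⟨p, hp, hqeq⟩ β hβ
    rw [hqeq] at hβ
    obtain ⟨α, hα, rfl⟩ := hβ
    intro hE
    have hE' := (S.mem_phi_ginv x _).mp hE
    rw [S.act_act_inv] at hE'
    exact hE'.2 (S.phi_pos hα)
  have hrUB : S.IsUB (insert ⟨b, x⟩ F) ⟨Q.1, Q.2 ≫ x⟩ := by
    intro p hp
    rcases Set.mem_insert_iff.mp hp with rfl | hpF
    · intro α hα
      have hαx : α ∈ S.Phi x := hα
      show α ∈ S.Phi (Q.2 ≫ x)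
      rw [S.mem_phi_comp]
      refine ⟨S.phi_pos hαx, Or.inr ⟨hαx, fun hn => ?_⟩⟩
      apply hQdisj _ hn
      rw [S.mem_phi_ginv]
      refine ⟨(S.neg_pos_iff _).mpr ((S.mem_phi x α).mp hαx).2, ?_⟩
      rw [S.act_neg, S.act_act_inv]
      exact (S.pos_iff _).mp ((S.mem_phi x α).mp hαx).1
    · intro α hα
      obtain ⟨q, hqF, hqeq⟩ := hFqmem p hpF
      show α ∈ S.Phi (Q.2 ≫ x)
      rw [S.mem_phi_comp]
      refine ⟨S.phi_pos hα, Or.inl ?_⟩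
      apply hQ.1 q hqF
      rw [hqeq]
      exact ⟨α, hα, rfl⟩
  have hMr := hM.2 _ hrUB
  have hδUB : S.IsUB Fq ⟨j.1, j.2 ≫ Groupoid.inv x⟩ := by
    rintro q ⟨p, hp, hqeq⟩ β hβ
    rw [hqeq] at hβ
    obtain ⟨α, hα, rfl⟩ := hβ
    show S.act (Groupoid.inv x) α ∈ S.Phi (j.2 ≫ Groupoid.inv x)
    rw [S.phi_comp_ginv_of_disj j.2 x hdisj]
    exact Or.inl ⟨α, hj.1 p hp hα, rfl⟩
  have hQδ := hQ.2 _ hδUB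
  constructor
  · apply Set.Subset.antisymm
    · intro α hα
      have hr : α ∈ S.Phi (Q.2 ≫ x) := hMr hα
      rw [S.mem_phi_comp] at hr
      rcases hr.2 with hβ | ⟨hx', -⟩
      · have hδ : S.act (Groupoid.inv x) α ∈ S.Phi (j.2 ≫ Groupoid.inv x) := hQδ hβ
        rw [S.phi_comp_ginv_of_disj j.2 x hdisj] at hδ
        rcases hδ with ⟨α', hα', hββ⟩ | hE
        · have heq : α' = α := by
            have := congrArg (S.act x) hββ
            rwa [S.act_act_inv, S.act_act_inv] at this
          exact Or.inr (heq ▸ hα')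
        · exfalso
          have hE' := (S.mem_phi_ginv x _).mp hE
          rw [S.act_act_inv] at hE'
          exact hE'.2 (S.phi_pos hα)
      · exact Or.inl hx'
    · apply Set.union_subset
      · exact hM.1 ⟨b, x⟩ (Set.mem_insert _ _)
      · exact hj.2 M (fun p hp => hM.1 p (Set.mem_insert_of_mem _ hp))
  · exact hdisj

end SGS

/-- if `R` is a finite, faithful, complete signed groupoid set, then
`R^□` is finite and complete; moreover every family of morphisms of `G^□` with
codomain `(a, X)` has a join in the weak order at `(a, X)` which is also its join in
the weak order on `ₐG` (the inclusion of weak orders preserves all joins). -/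
theorem stmt_18 {G : Type u} [Groupoid G] {R : G → Type v} (S : SGS G R)
    (hfin : S.FiniteSGS) (hfa : S.Faithful) (hcomp : S.Complete) :
    Finite (Σ a : G, Set (SHoms G a)) ∧
    (∀ (a : G) (X : Set (SHoms G a)), Finite (S.BHInto a X)) ∧
    (∀ (a : G) (X : Set (SHoms G a)) (F : Set (S.BHInto a X)),
      ∃ j : S.BHInto a X,
        (∀ m ∈ F, S.PhiS (S.BHunder m) ⊆ S.PhiS (S.BHunder j)) ∧
        (∀ k : SHoms G a, (∀ m ∈ F, S.PhiS (S.BHunder m) ⊆ S.PhiS k) →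
          S.PhiS (S.BHunder j) ⊆ S.PhiS k)) := by
  classical
  obtain ⟨hG, hHom, hR⟩ := hfin
  haveI := hG
  haveI := hHom
  haveI : ∀ a : G, Finite (SHoms G a) := fun a => by
    show Finite (Σ b : G, (b ⟶ a)); infer_instance
  refine ⟨by infer_instance, ?_, ?_⟩
  · intro a X
    exact inferInstanceAs
      (Finite (Σ (b : G) (Y : Set (SHoms G b)), {f : b ⟶ a // S.IsBHHom Y X f}))
  · intro a X F
    obtain ⟨j, hj⟩ := hcomp a (S.BHunder '' F)
    have hex : ∀ g : X, ∃ h : SHoms G j.1,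
        S.act j.2 '' S.PhiS h = S.PhiS g.1 := by
      intro g
      obtain ⟨M, hM⟩ := hcomp a (insert g.1 (S.BHunder '' F))
      have hsq : ∀ p ∈ S.BHunder '' F, (∀ α ∈ S.PhiS p, α ∉ S.Phi g.1.2) ∧
          ∃ m : SHoms G a, S.PhiS m = S.Phi g.1.2 ∪ S.PhiS p := by
        rintro p ⟨m', hm', rfl⟩
        obtain ⟨σ', hbij, hact⟩ := m'.2.2.2
        obtain ⟨h, hh⟩ := hbij.2 g
        have hkey : S.act m'.2.2.1 '' S.Phi h.1.2 = S.PhiS g.1 := by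
          have h2 := hact h
          rw [hh] at h2
          exact h2
        have hpos : ∀ β ∈ S.Phi h.1.2, S.act m'.2.2.1 β ∈ S.pos a := by
          intro β hβ
          have : S.act m'.2.2.1 β ∈ S.PhiS g.1 :=
            hkey ▸ Set.mem_image_of_mem _ hβ
          exact S.phi_pos this
        obtain ⟨hceq, hdisj'⟩ := S.phi_comp_of_pos h.1.2 m'.2.2.1 hpos
        constructor
        · intro α hα hαx
          have hαx' : α ∈ S.act m'.2.2.1 '' S.Phi h.1.2 := by rw [hkey]; exact hαx
          exact hdisj' α hαx' hα
        · refine ⟨⟨h.1.1, h.1.2 ≫ m'.2.2.1⟩, ?_⟩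
          show S.Phi (h.1.2 ≫ m'.2.2.1) = _
          rw [hceq, hkey, Set.union_comm]
          rfl
      obtain ⟨hMeq, hMdisj⟩ := S.join_sq hcomp g.1.2 (S.BHunder '' F) hj hM hsq
      refine ⟨⟨M.1, M.2 ≫ Groupoid.inv j.2⟩, ?_⟩
      have hle : S.Phi j.2 ⊆ S.PhiS M := by
        rw [hMeq]; exact Set.subset_union_right
      show S.act j.2 '' S.Phi (M.2 ≫ Groupoid.inv j.2) = _
      rw [S.act_phi_comp_ginv M.2 j.2 hle]
      have : S.PhiS M \ S.Phi j.2 = S.PhiS g.1 := by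
        rw [hMeq]
        ext α
        constructor
        · rintro ⟨hα | hα, hn⟩
          · exact hα
          · exact absurd hα hn
        · intro hα
          exact ⟨Or.inl hα, fun hj' => hMdisj α hj' hα⟩
      exact this
    choose hfun hkey using hex
    have hinj : Function.Injective hfun := by
      intro g g' hgg
      have : S.PhiS g.1 = S.PhiS g'.1 := by rw [← hkey g, ← hkey g', hgg]
      exact Subtype.ext (S.phiS_inj hfa this)
    refine ⟨⟨j.1, Set.range hfun, j.2, ?_⟩, ?_, ?_⟩
    · refine ⟨(Equiv.ofInjective hfun hinj).symm,
        (Equiv.ofInjective hfun hinj).symm.bijective, fun q => ?_⟩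
      have h1 : hfun ((Equiv.ofInjective hfun hinj).symm q) = q.1 :=
        congrArg Subtype.val ((Equiv.ofInjective hfun hinj).apply_symm_apply q)
      rw [← h1]
      exact hkey _
    · intro m hm
      exact hj.1 _ (Set.mem_image_of_mem _ hm)
    · intro k hk
      refine hj.2 k ?_
      rintro p ⟨m, hm, rfl⟩
      exact hk m hm
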